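/- Let V be a finite connected set of unit cells in the d-dimensional integer grid (d ≥ 2), connected via face-adjacency, and let B denote the set of cells of V adjacent (via a face) to the unique infinite face-connected component of the complement of V. Suppose x ∈ B is an articulation cell of V, and x is face-adjacent to a cell y ∈ V such that the connected component of V \ {x} containing y is disjoint from B. Then the face of x opposite the face shared with y lies on the outer boundary of V, i.e., the cell of the grid adjacent to x opposite y belongs to the infinite component of the complement of V. -/

import Mathlib

/-- The grid graph on `ℤ^d`: cells are face-adjacent iff their centers are at distance 1. -/
def gridGraph (d : ℕ) : SimpleGraph (Fin d → ℤ) where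
  Adj a b := (∑ i, |a i - b i|) = 1
  symm := by
    constructor
    intro a b h
    simpa [abs_sub_comm] using h
  loopless := by
    constructor
    intro a h
    simp at h

/-- Reachability within a set `S` of cells via face-adjacency. -/
def ReachIn (d : ℕ) (S : Set (Fin d → ℤ)) (a b : Fin d → ℤ) : Prop :=
  Relation.ReflTransGen (fun x y => x ∈ S ∧ y ∈ S ∧ (gridGraph d).Adj x y) a b

/-- A set of cells is (face-)connected. -/
def IsConn (d : ℕ) (S : Set (Fin d → ℤ)) : Prop :=
  S.Nonempty ∧ ∀ a ∈ S, ∀ b ∈ S, ReachIn d S a b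

/-- The outer boundary modules of `V`: cells of `V` face-adjacent to a cell of an
infinite face-connected component of the complement of `V`. -/
def Bout (d : ℕ) (V : Set (Fin d → ℤ)) : Set (Fin d → ℤ) :=
  {v | v ∈ V ∧ ∃ c, c ∉ V ∧ (gridGraph d).Adj v c ∧
    Set.Infinite {b | ReachIn d Vᶜ c b}}

/-- Adjacent cells differ in exactly one coordinate, by 1. -/
lemma adj_exists {d : ℕ} {a b : Fin d → ℤ} (h : (gridGraph d).Adj a b) :
    ∃ i, |a i - b i| = 1 ∧ ∀ j, j ≠ i → a j = b j := by
  have h' : (∑ i, |a i - b i|) = 1 := h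
  have hex : ∃ i, |a i - b i| ≠ 0 := by
    by_contra h0
    push_neg at h0
    simp [h0] at h'
  obtain ⟨i, hi⟩ := hex
  have h1 : 1 ≤ |a i - b i| := Int.one_le_abs (by simpa [abs_eq_zero] using hi)
  have h2 : |a i - b i| ≤ 1 := by
    calc |a i - b i| ≤ ∑ j, |a j - b j| :=
          Finset.single_le_sum (f := fun j => |a j - b j|) (fun j _ => abs_nonneg _) (Finset.mem_univ i)
      _ = 1 := h'
  have heq : |a i - b i| = 1 := le_antisymm h2 h1
  refine ⟨i, heq, fun j hj => ?_⟩
  have hsum : (∑ k ∈ Finset.univ.erase i, |a k - b k|) + |a i - b i| = 1 := by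
    rw [Finset.sum_erase_add _ _ (Finset.mem_univ i)]; exact h'
  have hz : (∑ k ∈ Finset.univ.erase i, |a k - b k|) = 0 := by omega
  have := (Finset.sum_eq_zero_iff_of_nonneg (fun k _ => abs_nonneg (a k - b k))).mp hz
  have hj0 : |a j - b j| = 0 := this j (Finset.mem_erase.mpr ⟨hj, Finset.mem_univ j⟩)
  have := abs_eq_zero.mp hj0
  omega

/-- Cells differing in exactly one coordinate by 1 are adjacent. -/
lemma adj_of_single {d : ℕ} {a b : Fin d → ℤ} (i : Fin d) (h1 : |a i - b i| = 1)
    (h2 : ∀ j, j ≠ i → a j = b j) : (gridGraph d).Adj a b := by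
  show (∑ j, |a j - b j|) = 1
  rw [Finset.sum_eq_single i]
  · exact h1
  · intro j _ hj
    simp [h2 j hj]
  · intro hni
    exact absurd (Finset.mem_univ i) hni

theorem stmt3 (d : ℕ) (hd : 2 ≤ d) (V : Set (Fin d → ℤ)) (hfin : V.Finite)
    (hconn : IsConn d V) (x : Fin d → ℤ) (hx : x ∈ Bout d V)
    (hart : ¬ IsConn d (V \ {x}))
    (y : Fin d → ℤ) (hy : y ∈ V) (hadj : (gridGraph d).Adj x y)
    (hdisj : ∀ b, ReachIn d (V \ {x}) y b → b ∉ Bout d V) :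
    (fun i => 2 * x i - y i) ∉ V ∧
      Set.Infinite {b | ReachIn d Vᶜ (fun i => 2 * x i - y i) b} := by
  obtain ⟨hxV, c, hcV, hxc, hinf⟩ := hx
  obtain ⟨i, hyi, hyo⟩ := adj_exists hadj
  obtain ⟨j, hcj, hco⟩ := adj_exists hxc
  have hynx : y ≠ x := by
    intro h
    rw [h] at hyi
    simp at hyi
  have hyB : y ∉ Bout d V := hdisj y Relation.ReflTransGen.refl
  by_cases hij : j = i
  · subst hij
    have h1 : x j - c j = 1 ∨ x j - c j = -1 := (abs_eq (by norm_num)).mp hcj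
    have h2 : x j - y j = 1 ∨ x j - y j = -1 := (abs_eq (by norm_num)).mp hyi
    by_cases hcy : c j = y j
    · exfalso
      apply hcV
      have hce : c = y := by
        funext k
        by_cases hk : k = j
        · rw [hk]; exact hcy
        · rw [← hco k hk, hyo k hk]
      rw [hce]; exact hy
    · have hcz : (fun k => 2 * x k - y k) = c := by
        funext k
        by_cases hk : k = j
        · subst hk; omega
        · have e1 := hco k hk
          have e2 := hyo k hk
          omega
      rw [hcz]
      exact ⟨hcV, hinf⟩
  · exfalso
    -- the diagonal cell u, adjacent to both c and y
    set u : Fin d → ℤ := fun k => if k = i then y i else c k with hu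
    have hinej : i ≠ j := fun h => hij h.symm
    have hci : c i = x i := (hco i hinej).symm
    have hyj : y j = x j := (hyo j hij).symm
    have hadjuc : (gridGraph d).Adj u c := by
      apply adj_of_single i
      · simp only [hu, if_pos rfl, hci]
        rw [abs_sub_comm]; exact hyi
      · intro k hk
        simp [hu, hk]
    have hadjyu : (gridGraph d).Adj y u := by
      apply adj_of_single j
      · simp only [hu, if_neg hij, hyj]
        exact hcj
      · intro k hk
        by_cases hki : k = i
        · subst hki; simp [hu]
        · simp only [hu, if_neg hki]
          rw [← hyo k hki, hco k hk]
    have hune : u ≠ x := by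
      intro h
      have : u i = x i := by rw [h]
      simp only [hu, if_pos rfl] at this
      rw [this] at hyi
      simp at hyi
    by_cases huV : u ∈ V
    · -- u is in y's component but on the outer boundary: contradiction
      have hstep : ReachIn d (V \ {x}) y u :=
        Relation.ReflTransGen.single ⟨⟨hy, hynx⟩, ⟨huV, hune⟩, hadjyu⟩
      exact hdisj u hstep ⟨huV, c, hcV, hadjuc, hinf⟩
    · -- u is in the infinite component, so y is on the outer boundary: contradiction
      apply hyB
      refine ⟨hy, u, huV, hadjyu, hinf.mono ?_⟩
      intro b hb
      exact Relation.ReflTransGen.head ⟨huV, hcV, hadjuc⟩ hb
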